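/- Let N₊ = N₋ = 1. Then the ℂ-vector space ker d / im d is four-dimensional, with basis given by the cohomology classes of 1, ψ₁, χ₁ and ψ₁χ₁. -/

import Mathlib

/-!
D = 2, signature (1,1) supersymmetry algebra cohomology.
`R2 Np Nm = ℂ[ψ₁,…,ψ_{N₊}, χ₁,…,χ_{N₋}]`, `Om2` is the free module with basis
`{1, c̃₁, c̃₂, c̃₁c̃₂}`, and `d2` is the differential with `dc̃₁ = P`, `dc̃₂ = Q`.
-/

open MvPolynomial

noncomputable section

/-- The polynomial ring `ℂ[ψ₁,…,ψ_{N₊}, χ₁,…,χ_{N₋}]`; `Sum.inl i ↦ ψᵢ`, `Sum.inr i ↦ χᵢ`. -/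
abbrev R2 (Np Nm : ℕ) : Type := MvPolynomial (Fin Np ⊕ Fin Nm) ℂ

/-- `Ω`: free `R2`-module with basis `{1, c̃₁, c̃₂, c̃₁c̃₂}` (components 0,1,2,3). -/
abbrev Om2 (Np Nm : ℕ) : Type := Fin 4 → R2 Np Nm

/-- The ghost `ψᵢ`. -/
def ψ {Np Nm : ℕ} (i : Fin Np) : R2 Np Nm := X (Sum.inl i)

/-- The ghost `χᵢ`. -/
def χ {Np Nm : ℕ} (i : Fin Nm) : R2 Np Nm := X (Sum.inr i)

/-- `P = Σ ψᵢ²`. -/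
def Pp (Np Nm : ℕ) : R2 Np Nm := ∑ i, ψ i ^ 2

/-- `Q = Σ χᵢ²`. -/
def Qq (Np Nm : ℕ) : R2 Np Nm := ∑ i, χ i ^ 2

/-- The differential `d(ω₀ + c̃₁ω₁ + c̃₂ω₂ + c̃₁c̃₂ω₃) = Pω₁ + Qω₂ + (Pc̃₂ − Qc̃₁)ω₃`,
as a `ℂ`-linear map. -/
def d2L (Np Nm : ℕ) : Om2 Np Nm →ₗ[ℂ] Om2 Np Nm where
  toFun ω := ![Pp Np Nm * ω 1 + Qq Np Nm * ω 2, -(Qq Np Nm * ω 3), Pp Np Nm * ω 3, 0]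
  map_add' a b := by
    funext k
    fin_cases k <;>
      simp [Pi.add_apply, Matrix.cons_val_zero, Matrix.cons_val_one, Matrix.head_cons,
        mul_add] <;> ring
  map_smul' c a := by
    funext k
    fin_cases k <;>
      simp [Pi.smul_apply, Matrix.cons_val_zero, Matrix.cons_val_one, Matrix.head_cons,
        mul_smul_comm, smul_add]

/-- Embedding of `R` into `Ω` (coefficient of the basis element `1`). -/
def ofR {Np Nm : ℕ} (r : R2 Np Nm) : Om2 Np Nm := ![r, 0, 0, 0]

lemma d2L_ofR {Np Nm : ℕ} (r : R2 Np Nm) : d2L Np Nm (ofR r) = 0 := by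
  funext k
  fin_cases k <;>
    simp [d2L, ofR, Matrix.cons_val_zero, Matrix.cons_val_one, Matrix.head_cons]

/-- The image of `d`, as a submodule of the kernel of `d` (`d∘d = 0`). -/
def Bsub (Np Nm : ℕ) : Submodule ℂ (LinearMap.ker (d2L Np Nm)) :=
  Submodule.comap (LinearMap.ker (d2L Np Nm)).subtype (LinearMap.range (d2L Np Nm))

/-- The cohomology `ker d / im d` as a `ℂ`-vector space. -/
def Hco (Np Nm : ℕ) : Type := LinearMap.ker (d2L Np Nm) ⧸ Bsub Np Nm

noncomputable instance (Np Nm : ℕ) : AddCommGroup (Hco Np Nm) :=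
  Submodule.Quotient.addCommGroup _

instance (Np Nm : ℕ) : Module ℂ (Hco Np Nm) := Submodule.Quotient.module _

/-- The cohomology class of a cocycle. -/
def cls {Np Nm : ℕ} (x : Om2 Np Nm) (hx : d2L Np Nm x = 0) : Hco Np Nm :=
  Submodule.Quotient.mk ⟨x, LinearMap.mem_ker.mpr hx⟩


-- divisibility criterion
lemma monomial_dvd_iff {σ : Type*} (s : σ →₀ ℕ) (p : MvPolynomial σ ℂ) :
    monomial s 1 ∣ p ↔ ∀ m, ¬ s ≤ m → coeff m p = 0 := by
  classical
  rw [monomial_one_dvd_iff_modMonomial_eq_zero, MvPolynomial.eq_zero_iff]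
  constructor
  · intro h m hm
    rw [← coeff_modMonomial_of_not_le p hm]
    exact h m
  · intro h d
    by_cases hd : s ≤ d
    · exact coeff_modMonomial_of_le p hd
    · rw [coeff_modMonomial_of_not_le p hd]; exact h d hd

lemma X_pow_dvd_iff {σ : Type*} (i : σ) (p : MvPolynomial σ ℂ) :
    (X i : MvPolynomial σ ℂ) ^ 2 ∣ p ↔ ∀ m, m i < 2 → coeff m p = 0 := by
  classical
  rw [X_pow_eq_monomial, monomial_dvd_iff]
  apply forall_congr'
  intro m
  rw [Finsupp.single_le_iff, not_le]

lemma X_pow_dvd_of_mul {σ : Type*} [DecidableEq σ] {i j : σ} (hij : i ≠ j) (u : MvPolynomial σ ℂ)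
    (h : (X i : MvPolynomial σ ℂ) ^ 2 ∣ X j ^ 2 * u) : (X i : MvPolynomial σ ℂ) ^ 2 ∣ u := by
  rw [X_pow_dvd_iff] at h ⊢
  intro m hm
  have h2 : coeff (Finsupp.single j 2 + m) ((X j : MvPolynomial σ ℂ) ^ 2 * u) = coeff m u := by
    rw [X_pow_eq_monomial, coeff_monomial_mul, one_mul]
  rw [← h2]
  apply h
  simp [Finsupp.single_apply, hij.symm, hm]

lemma struct_lemma (u v : R2 1 1)
    (h : X (Sum.inl 0) ^ 2 * u + X (Sum.inr 0) ^ 2 * v = 0) :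
    ∃ t : R2 1 1, u = X (Sum.inr 0) ^ 2 * t ∧ v = -(X (Sum.inl 0) ^ 2 * t) := by
  classical
  have hne : (Sum.inr (0 : Fin 1) : Fin 1 ⊕ Fin 1) ≠ Sum.inl 0 := by simp
  have hdvd : (X (Sum.inr 0) : R2 1 1) ^ 2 ∣ X (Sum.inl 0) ^ 2 * u := by
    have : X (Sum.inl 0) ^ 2 * u = -(X (Sum.inr 0) ^ 2 * v) := by linear_combination h
    rw [this]
    exact (dvd_mul_right _ _).neg_right
  obtain ⟨t, ht⟩ := X_pow_dvd_of_mul hne u hdvd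
  refine ⟨t, ht, ?_⟩
  have hX : (X (Sum.inr 0) : R2 1 1) ^ 2 ≠ 0 := pow_ne_zero _ (X_ne_zero _)
  have : X (Sum.inr 0) ^ 2 * v = X (Sum.inr 0) ^ 2 * (-(X (Sum.inl 0) ^ 2 * t)) := by
    rw [ht] at h; linear_combination h
  exact mul_left_cancel₀ hX this

lemma fs_eq (m : (Fin 1 ⊕ Fin 1) →₀ ℕ) :
    m = Finsupp.single (Sum.inl 0) (m (Sum.inl 0)) + Finsupp.single (Sum.inr 0) (m (Sum.inr 0)) := by
  classical
  ext x
  rcases x with i | i <;> fin_cases i <;> simp [Finsupp.single_apply]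

lemma decomp (p : R2 1 1)
    (h0 : coeff 0 p = 0)
    (h1 : coeff (Finsupp.single (Sum.inl 0) 1) p = 0)
    (h2 : coeff (Finsupp.single (Sum.inr 0) 1) p = 0)
    (h3 : coeff (Finsupp.single (Sum.inl 0) 1 + Finsupp.single (Sum.inr 0) 1) p = 0) :
    ∃ b c : R2 1 1, b * X (Sum.inl 0) ^ 2 + c * X (Sum.inr 0) ^ 2 = p := by
  classical
  rw [← Ideal.mem_span_pair]
  nth_rewrite 1 [as_sum p]
  apply Ideal.sum_mem
  intro m _
  by_cases ha : 2 ≤ m (Sum.inl 0)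
  · have : monomial m (coeff m p) =
        X (Sum.inl 0) ^ 2 * monomial (m - Finsupp.single (Sum.inl 0) 2) (coeff m p) := by
      rw [X_pow_eq_monomial, monomial_mul, one_mul,
        add_tsub_cancel_of_le (Finsupp.single_le_iff.mpr ha)]
    rw [this]
    exact Ideal.mul_mem_right _ _ (Ideal.subset_span (by simp))
  · by_cases hb : 2 ≤ m (Sum.inr 0)
    · have : monomial m (coeff m p) =
          X (Sum.inr 0) ^ 2 * monomial (m - Finsupp.single (Sum.inr 0) 2) (coeff m p) := by
        rw [X_pow_eq_monomial, monomial_mul, one_mul,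
          add_tsub_cancel_of_le (Finsupp.single_le_iff.mpr hb)]
      rw [this]
      exact Ideal.mul_mem_right _ _ (Ideal.subset_span (by simp))
    · push_neg at ha hb
      have hm := fs_eq m
      have hc : coeff m p = 0 := by
        nth_rewrite 1 [hm]
        interval_cases h : m (Sum.inl 0) <;> interval_cases h' : m (Sum.inr 0) <;>
          (try simp only [Finsupp.single_zero, zero_add, add_zero]) <;>
          first | exact h0 | exact h1 | exact h2 | exact h3
      rw [hc, monomial_zero]
      exact Ideal.zero_mem _

lemma coeff_in_ideal (y1 y2 : R2 1 1) (m : (Fin 1 ⊕ Fin 1) →₀ ℕ)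
    (h1 : m (Sum.inl 0) < 2) (h2 : m (Sum.inr 0) < 2) :
    coeff m (X (Sum.inl 0) ^ 2 * y1 + X (Sum.inr 0) ^ 2 * y2) = 0 := by
  rw [coeff_add, (X_pow_dvd_iff _ _).mp (dvd_mul_right _ _) m h1,
    (X_pow_dvd_iff _ _).mp (dvd_mul_right _ _) m h2, add_zero]

lemma hPp : Pp 1 1 = X (Sum.inl 0) ^ 2 := by simp [Pp, ψ]

lemma hQq : Qq 1 1 = X (Sum.inr 0) ^ 2 := by simp [Qq, χ]

/-- The four distinguished monomials `1, ψ, χ, ψχ`. -/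
def μ : Fin 4 → ((Fin 1 ⊕ Fin 1) →₀ ℕ) :=
  ![0, Finsupp.single (Sum.inl 0) 1, Finsupp.single (Sum.inr 0) 1,
    Finsupp.single (Sum.inl 0) 1 + Finsupp.single (Sum.inr 0) 1]

/-- Taking the four distinguished coefficients of the component along `1`. -/
def Fcoef : Om2 1 1 →ₗ[ℂ] (Fin 4 → ℂ) where
  toFun x := fun k => coeff (μ k) (x 0)
  map_add' a b := by funext k; simp [coeff_add]
  map_smul' c a := by funext k; simp [coeff_smul]

/-- `Fcoef` restricted to the kernel of `d`. -/
def Fk : LinearMap.ker (d2L 1 1) →ₗ[ℂ] (Fin 4 → ℂ) :=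
  Fcoef ∘ₗ (LinearMap.ker (d2L 1 1)).subtype

lemma ker_Fk : Bsub 1 1 = LinearMap.ker Fk := by
  ext x
  constructor
  · rintro ⟨y, hy⟩
    have hy0 : (x : Om2 1 1) 0 = Pp 1 1 * y 1 + Qq 1 1 * y 2 := by
      rw [show (x : Om2 1 1) = d2L 1 1 y from hy.symm]
      simp [d2L]
    rw [LinearMap.mem_ker]
    funext k
    have h : Fk x k = coeff (μ k) ((x : Om2 1 1) 0) := rfl
    rw [Pi.zero_apply, h, hy0, hPp, hQq]
    apply coeff_in_ideal <;> fin_cases k <;>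
      simp [μ, Finsupp.single_apply]
  · intro hx
    have hd : d2L 1 1 (x : Om2 1 1) = 0 := x.2
    have e0 := congr_fun hd 0
    have e2 := congr_fun hd 2
    simp only [d2L, LinearMap.coe_mk, AddHom.coe_mk, Matrix.cons_val_zero, Matrix.cons_val_two,
      Matrix.tail_cons, Matrix.head_cons, Pi.zero_apply] at e0 e2
    have e2' : (X (Sum.inl 0) : R2 1 1) ^ 2 * (x : Om2 1 1) 3 = 0 := by
      rw [← hPp]; exact e2
    have e0' : (X (Sum.inl 0) : R2 1 1) ^ 2 * (x : Om2 1 1) 1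
        + (X (Sum.inr 0) : R2 1 1) ^ 2 * (x : Om2 1 1) 2 = 0 := by
      rw [← hPp, ← hQq]; exact e0
    have hx3 : (x : Om2 1 1) 3 = 0 := by
      rcases mul_eq_zero.mp e2' with h | h
      · exact absurd h (pow_ne_zero _ (X_ne_zero _))
      · exact h
    obtain ⟨t, ht1, ht2⟩ := struct_lemma _ _ e0'
    have hcoef : ∀ k : Fin 4, coeff (μ k) ((x : Om2 1 1) 0) = 0 := by
      intro k
      have h : Fk x k = coeff (μ k) ((x : Om2 1 1) 0) := rfl
      rw [← h, LinearMap.mem_ker.mp hx, Pi.zero_apply]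
    obtain ⟨b, c, hbc⟩ := decomp ((x : Om2 1 1) 0)
      (hcoef 0) (hcoef 1) (hcoef 2) (hcoef 3)
    refine ⟨![0, b, c, -t], ?_⟩
    funext k
    fin_cases k <;>
      (simp only [Submodule.subtype_apply]; simp [d2L, hPp, hQq, ht1, ht2, hx3]; try linear_combination hbc)

/-- The four generators `1, ψ, χ, ψχ`. -/
def gen : Fin 4 → R2 1 1 := ![1, ψ 0, χ 0, ψ 0 * χ 0]

lemma Fk_gen : ∀ i : Fin 4, Fk ⟨ofR (gen i), LinearMap.mem_ker.mpr (d2L_ofR (gen i))⟩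
    = Pi.single i 1 := by
  intro i
  funext k
  have h : Fk ⟨ofR (gen i), LinearMap.mem_ker.mpr (d2L_ofR (gen i))⟩ k
      = coeff (μ k) (gen i) := rfl
  rw [h]
  have hXX : (X (Sum.inl 0) : R2 1 1) * X (Sum.inr 0) = monomial (μ 3) 1 := by
    rw [X, X, monomial_mul, mul_one]
    rfl
  have ne1 : (0 : (Fin 1 ⊕ Fin 1) →₀ ℕ) ≠ Finsupp.single (Sum.inl 0) 1 := by
    intro h; have := DFunLike.congr_fun h (Sum.inl 0); simp [Finsupp.single_apply] at this
  have ne2 : (0 : (Fin 1 ⊕ Fin 1) →₀ ℕ) ≠ Finsupp.single (Sum.inr 0) 1 := by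
    intro h; have := DFunLike.congr_fun h (Sum.inr 0); simp [Finsupp.single_apply] at this
  have ne3 : (0 : (Fin 1 ⊕ Fin 1) →₀ ℕ)
      ≠ Finsupp.single (Sum.inl 0) 1 + Finsupp.single (Sum.inr 0) 1 := by
    intro h; have := DFunLike.congr_fun h (Sum.inl 0)
    simp [Finsupp.add_apply, Finsupp.single_apply] at this
  have ne12 : (Finsupp.single (Sum.inl 0) 1 : (Fin 1 ⊕ Fin 1) →₀ ℕ)
      ≠ Finsupp.single (Sum.inr 0) 1 := by
    intro h; have := DFunLike.congr_fun h (Sum.inl 0); simp [Finsupp.single_apply] at this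
  have ne13 : (Finsupp.single (Sum.inl 0) 1 : (Fin 1 ⊕ Fin 1) →₀ ℕ)
      ≠ Finsupp.single (Sum.inl 0) 1 + Finsupp.single (Sum.inr 0) 1 := by
    intro h; have := DFunLike.congr_fun h (Sum.inr 0)
    simp [Finsupp.add_apply, Finsupp.single_apply] at this
  have ne23 : (Finsupp.single (Sum.inr 0) 1 : (Fin 1 ⊕ Fin 1) →₀ ℕ)
      ≠ Finsupp.single (Sum.inl 0) 1 + Finsupp.single (Sum.inr 0) 1 := by
    intro h; have := DFunLike.congr_fun h (Sum.inl 0)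
    simp [Finsupp.add_apply, Finsupp.single_apply] at this
  fin_cases i <;> fin_cases k <;>
    simp [gen, μ, ψ, χ, Pi.single_apply, coeff_X', coeff_one, hXX, coeff_monomial,
      ne1, ne2, ne3, ne12, ne13, ne23, ne1.symm, ne2.symm, ne3.symm, ne12.symm,
      ne13.symm, ne23.symm]

/-- for `N₊ = N₋ = 1`, the cohomology `ker d / im d` is a
four-dimensional `ℂ`-vector space with basis given by the classes of
`1`, `ψ₁`, `χ₁` and `ψ₁χ₁`. -/
theorem stmt13 :
    Module.finrank ℂ (Hco 1 1) = 4 ∧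
    ∃ B : Module.Basis (Fin 4) ℂ (Hco 1 1),
      B 0 = cls (ofR 1) (d2L_ofR 1) ∧
      B 1 = cls (ofR (ψ 0)) (d2L_ofR (ψ 0)) ∧
      B 2 = cls (ofR (χ 0)) (d2L_ofR (χ 0)) ∧
      B 3 = cls (ofR (ψ 0 * χ 0)) (d2L_ofR (ψ 0 * χ 0)) := by
  have hinj : LinearMap.ker (Submodule.liftQ (Bsub 1 1) Fk ker_Fk.le) = ⊥ :=
    Submodule.ker_liftQ_eq_bot _ _ _ ker_Fk.ge
  have hgen : ∀ i : Fin 4, Fk ⟨ofR (gen i), LinearMap.mem_ker.mpr (d2L_ofR (gen i))⟩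
      = Pi.single i 1 := Fk_gen
  have hsurj : Function.Surjective (Submodule.liftQ (Bsub 1 1) Fk ker_Fk.le) := by
    rw [← LinearMap.range_eq_top, Submodule.range_liftQ, LinearMap.range_eq_top]
    intro v
    have hv : v = ∑ i : Fin 4, v i • (Pi.single i 1 : Fin 4 → ℂ) := by
      funext k
      rw [Finset.sum_apply]
      simp [Pi.single_apply, mul_comm]
    refine ⟨∑ i : Fin 4, v i • ⟨ofR (gen i), LinearMap.mem_ker.mpr (d2L_ofR (gen i))⟩, ?_⟩
    rw [map_sum]
    simp_rw [map_smul, hgen]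
    exact hv.symm
  let e : Hco 1 1 ≃ₗ[ℂ] (Fin 4 → ℂ) :=
    LinearEquiv.ofBijective (Submodule.liftQ (Bsub 1 1) Fk ker_Fk.le)
      ⟨LinearMap.ker_eq_bot.mp hinj, hsurj⟩
  have hecls : ∀ i : Fin 4, e (cls (ofR (gen i)) (d2L_ofR (gen i))) = Pi.single i 1 := by
    intro i
    show Submodule.liftQ (Bsub 1 1) Fk ker_Fk.le (Submodule.Quotient.mk _) = _
    rw [Submodule.liftQ_apply]
    exact hgen i
  refine ⟨by rw [e.finrank_eq]; exact Module.finrank_fin_fun ℂ, (Pi.basisFun ℂ (Fin 4)).map e.symm,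
    ?_, ?_, ?_, ?_⟩ <;>
  · rw [Module.Basis.map_apply, Pi.basisFun_apply, LinearEquiv.symm_apply_eq]
    exact (hecls _).symm
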